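/- For every u ∈ ℂ \ 𝕌 there exist φ ∈ ℝ and ρ > 1 such that R_u(ζ) = (ζ − ρ e^{iφ})(ζ − e^{−2iφ})(ζ − ρ^{−1} e^{iφ}) for all ζ ∈ ℂ; that is, the roots of R_u are ρ e^{iφ}, e^{−2iφ}, and ρ^{−1} e^{iφ}. -/

import Mathlib

/-- The cubic encoding the stationary points of the NV phase at positive energy. -/
noncomputable def Rcubic (u ζ : ℂ) : ℂ :=
  ζ ^ 3 - ((starRingEnd ℂ u) / 6) * ζ ^ 2 + (u / 6) * ζ - 1

/-- The region `𝕌` enclosed by the curve `𝒰`. -/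
def regionU : Set ℂ :=
  {w : ℂ | ∃ s : ℝ, s ∈ Set.Icc (0 : ℝ) 1 ∧ ∃ φ : ℝ,
    w = 6 * (s : ℂ) * (2 * Complex.exp (-(Complex.I * (φ : ℂ))) + Complex.exp (2 * Complex.I * (φ : ℂ)))}

open Complex

noncomputable def Qfun (e ζ : ℂ) : ℂ := ζ ^ 3 - e * ζ ^ 2 + (starRingEnd ℂ e) * ζ - 1

lemma Qfun_root_inv (e z : ℂ) (hz : z ≠ 0) (h : Qfun e z = 0) :
    Qfun e ((starRingEnd ℂ z)⁻¹) = 0 := by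
  have hcz : (starRingEnd ℂ z) ≠ 0 := by simpa using hz
  have key : Qfun e ((starRingEnd ℂ z)⁻¹) * (starRingEnd ℂ z) ^ 3
      = -(starRingEnd ℂ) (Qfun e z) := by
    simp only [Qfun, map_sub, map_add, map_mul, map_pow, map_one, Complex.conj_conj]
    field_simp
    ring
  rw [h, map_zero, neg_zero] at key
  exact (mul_eq_zero.mp key).resolve_right (pow_ne_zero _ hcz)

/-- discriminant of a self-inversive monic cubic with constant term -1 is real -/
lemma cubic_factor (p q t : ℂ) : ∃ a b c : ℂ,
    a + b + c = -p ∧ a*b + b*c + a*c = q ∧ a*b*c = -t := by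
  set P : Cubic ℂ := ⟨1, p, q, t⟩ with hP
  have ha : P.a ≠ 0 := one_ne_zero
  have hs : Polynomial.Splits (P.toPoly.map (RingHom.id ℂ)) := IsAlgClosed.splits _
  obtain ⟨x, y, z, h3⟩ := (Cubic.splits_iff_roots_eq_three ha).mp hs
  have hb := Cubic.b_eq_three_roots ha h3
  have hc := Cubic.c_eq_three_roots ha h3
  have hd := Cubic.d_eq_three_roots ha h3
  simp only [hP, RingHom.id_apply] at hb hc hd
  exact ⟨x, y, z, by linear_combination hb, by linear_combination -hc, by linear_combination hd⟩

lemma disc_real (w A B C : ℂ) (h1 : A + B + C = w)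
    (h2 : A*B + B*C + A*C = (starRingEnd ℂ) w) (h3 : A*B*C = 1) :
    ((A-B)*(B-C)*(C-A))^2
      = (((Complex.normSq w)^2 - 8*(w^3).re + 18*(Complex.normSq w) - 27 : ℝ) : ℂ) := by
  have hDD : ((A-B)*(B-C)*(C-A))^2
      = 18*(A+B+C)*(A*B+B*C+A*C)*(A*B*C) - 4*(A+B+C)^3*(A*B*C)
        + (A+B+C)^2*(A*B+B*C+A*C)^2 - 4*(A*B+B*C+A*C)^3 - 27*(A*B*C)^2 := by
    ring
  rw [h1, h2, h3] at hDD
  rw [hDD]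
  have hms : w * (starRingEnd ℂ) w = (Complex.normSq w : ℂ) := Complex.mul_conj w
  have hadd : w^3 + (starRingEnd ℂ) (w^3) = ((2*(w^3).re : ℝ) : ℂ) := Complex.add_conj _
  rw [map_pow] at hadd
  push_cast at hadd ⊢
  linear_combination (18 + w*((starRingEnd ℂ) w) + (Complex.normSq w : ℂ)) * hms - 4 * hadd

lemma doubleRoot (u : ℂ) (r : ℝ) (hr1 : 1 ≤ r) (A C : ℂ)
    (hsum : A + A + C = (r : ℂ) * ((starRingEnd ℂ) u / 6))
    (hp2 : A*A + A*C + A*C = (r : ℂ) * (u / 6))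
    (hprod : A*A*C = 1) : u ∈ regionU := by
  have hr0 : (0:ℝ) < r := lt_of_lt_of_le one_pos hr1
  have hrC : (r : ℂ) ≠ 0 := by exact_mod_cast ne_of_gt hr0
  set e : ℂ := (r : ℂ) * ((starRingEnd ℂ) u / 6) with hedef
  have hce : (starRingEnd ℂ) e = (r : ℂ) * (u / 6) := by
    simp [hedef, map_mul, Complex.conj_ofReal, map_div₀, Complex.conj_conj, map_ofNat]
  have hQfac : ∀ ζ : ℂ, Qfun e ζ = (ζ - A) * (ζ - A) * (ζ - C) := by
    intro ζ
    rw [Qfun, hce, ← hsum, ← hp2]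
    linear_combination hprod
  have hA0 : A ≠ 0 := by
    rintro rfl; simp at hprod
  have hrootA : Qfun e A = 0 := by rw [hQfac]; ring
  have hrootA' := Qfun_root_inv e A hA0 hrootA
  rw [hQfac] at hrootA'
  have hC : C = (A*A)⁻¹ := eq_inv_of_mul_eq_one_left (by linear_combination hprod)
  have habsA : ‖A‖ = 1 := by
    have hcA0 : (starRingEnd ℂ) A ≠ 0 := by simpa using hA0
    rcases mul_eq_zero.mp hrootA' with h | h
    · rcases mul_eq_zero.mp h with h | h <;>
      · have h' : ((starRingEnd ℂ) A)⁻¹ = A := sub_eq_zero.mp h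
        have hone : A * (starRingEnd ℂ) A = 1 := by
          have h2 := inv_mul_cancel₀ hcA0
          rwa [h'] at h2
        rw [Complex.mul_conj] at hone
        have h2 : Complex.normSq A = 1 := by exact_mod_cast hone
        rw [Complex.normSq_eq_norm_sq] at h2
        have h3 : (‖A‖ - 1) * (‖A‖ + 1) = 0 := by linear_combination h2
        rcases mul_eq_zero.mp h3 with h4 | h4
        · linarith
        · linarith [norm_nonneg A]
    · have h' : ((starRingEnd ℂ) A)⁻¹ = C := sub_eq_zero.mp h
      rw [hC] at h'
      have hcA : (starRingEnd ℂ) A = A * A := by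
        field_simp at h'
        exact h'.symm.trans (sq A)
      have habs2 := congrArg (‖·‖) hcA
      rw [Complex.norm_conj, norm_mul] at habs2
      have hpos := norm_pos_iff.mpr hA0
      have := mul_left_cancel₀ (ne_of_gt hpos)
        (by linarith [habs2] : ‖A‖ * 1 = ‖A‖ * ‖A‖)
      linarith
  have hcAinv : (starRingEnd ℂ) A = A⁻¹ := by
    have : A * (starRingEnd ℂ) A = 1 := by
      rw [Complex.mul_conj, Complex.normSq_eq_norm_sq, habsA]
      norm_num
    exact (inv_eq_of_mul_eq_one_right this).symm
  set φ : ℝ := Complex.arg A with hφ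
  have hexp : Complex.exp ((φ : ℂ) * Complex.I) = A := by
    have := Complex.norm_mul_exp_arg_mul_I A
    rwa [habsA, Complex.ofReal_one, one_mul] at this
  refine ⟨r⁻¹, ⟨le_of_lt (inv_pos.mpr hr0), inv_le_one_of_one_le₀ hr1⟩, φ, ?_⟩
  have hexp1 : Complex.exp (-(Complex.I * (φ : ℂ))) = A⁻¹ := by
    rw [Complex.exp_neg, mul_comm Complex.I, hexp]
  have hexp2 : Complex.exp (2 * Complex.I * (φ : ℂ)) = A * A := by
    rw [show (2 : ℂ) * Complex.I * (φ : ℂ) = (φ:ℂ)*Complex.I + (φ:ℂ)*Complex.I by ring,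
      Complex.exp_add, hexp]
  rw [hexp1, hexp2]
  rw [hC] at hp2
  push_cast
  field_simp at hp2 ⊢
  linear_combination -hp2

lemma allOnCircle (u a b c : ℂ) (hu0 : u ≠ 0)
    (he1 : a + b + c = (starRingEnd ℂ) u / 6)
    (he2 : a*b + b*c + a*c = u / 6)
    (he3 : a*b*c = 1)
    (hA : ‖a‖ = 1) (hB : ‖b‖ = 1) (hC : ‖c‖ = 1) :
    u ∈ regionU := by
  set v : ℂ := (starRingEnd ℂ) u / 6 with hv
  have hvc : (starRingEnd ℂ) v = u / 6 := by
    simp [hv, map_div₀, Complex.conj_conj, map_ofNat]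
  have hv0 : v ≠ 0 := by
    simp only [hv, ne_eq, div_eq_zero_iff, map_eq_zero]
    push_neg
    exact ⟨hu0, by norm_num⟩
  -- conjugates of the roots
  have conj_root : ∀ x : ℂ, ‖x‖ = 1 → (starRingEnd ℂ) x = x⁻¹ := by
    intro x hx
    have h1 : x * (starRingEnd ℂ) x = 1 := by
      rw [Complex.mul_conj, Complex.normSq_eq_norm_sq, hx]; norm_num
    exact eq_inv_of_mul_eq_one_left (by linear_combination h1)
  have ha0 : a ≠ 0 := by intro h; rw [h] at hA; simp at hA
  have hca : (starRingEnd ℂ) a = b * c := by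
    rw [conj_root a hA]
    exact inv_eq_of_mul_eq_one_right (by linear_combination he3)
  have hcb : (starRingEnd ℂ) b = a * c := by
    rw [conj_root b hB]
    exact inv_eq_of_mul_eq_one_right (by linear_combination he3)
  have hcc : (starRingEnd ℂ) c = a * b := by
    rw [conj_root c hC]
    exact inv_eq_of_mul_eq_one_right (by linear_combination he3)
  have hconj : (starRingEnd ℂ) ((a-b)*(b-c)*(c-a)) = -((a-b)*(b-c)*(c-a)) := by
    simp only [map_mul, map_sub, hca, hcb, hcc]
    linear_combination (-((a-b)*(b-c)*(c-a))) * he3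
  set P : ℂ := (a-b)*(b-c)*(c-a) with hPdef
  have hre : P.re = 0 := by
    have h2 := congrArg Complex.re hconj
    rw [Complex.conj_re, Complex.neg_re] at h2
    linarith
  have hsq : P^2 = -((P.im : ℂ))^2 := by
    have hP : P = (P.im : ℂ) * Complex.I := by
      conv_lhs => rw [← Complex.re_add_im P]
      rw [hre]; simp
    conv_lhs => rw [hP]
    rw [mul_pow, Complex.I_sq]; ring
  have he2' : a*b + b*c + a*c = (starRingEnd ℂ) v := by rw [hvc]; exact he2
  have hdisc := disc_real v a b c he1 he2' he3
  set n : ℝ := Complex.normSq v with hn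
  set K : ℝ := (v^3).re with hK
  have hf1 : n^2 - 8*K + 18*n - 27 = -(P.im^2) := by
    have hcast : ((n^2 - 8*K + 18*n - 27 : ℝ) : ℂ) = ((-(P.im^2) : ℝ) : ℂ) := by
      rw [← hdisc, hsq]; push_cast; ring
    exact_mod_cast hcast
  have hnpos : 0 < n := Complex.normSq_pos.mpr hv0
  set f : ℝ → ℝ := fun r => n^2*r^4 - 8*K*r^3 + 18*n*r^2 - 27 with hfdef
  have hf1' : f 1 ≤ 0 := by
    simp only [hfdef, one_pow, mul_one]
    nlinarith [sq_nonneg P.im]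
  set R : ℝ := max 1 ((8*|K| + 27)/n^2) with hR
  have hR1 : 1 ≤ R := le_max_left _ _
  have hfR : 0 ≤ f R := by
    have hn2 : 0 < n^2 := by positivity
    have h1 : (8*|K| + 27)/n^2 ≤ R := le_max_right _ _
    have key : (8*|K| + 27) * R^3 ≤ (R * n^2) * R^3 :=
      mul_le_mul_of_nonneg_right ((div_le_iff₀ hn2).mp h1) (by positivity)
    have hR3 : (1:ℝ) ≤ R^3 := one_le_pow₀ hR1
    have p1 : K * R^3 ≤ |K| * R^3 :=
      mul_le_mul_of_nonneg_right (le_abs_self K) (by positivity)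
    have p2 : (0:ℝ) ≤ 18 * n * R^2 := by positivity
    simp only [hfdef]
    nlinarith [key, p1, p2, hR3]
  have hcont : Continuous f := by
    simp only [hfdef]; fun_prop
  obtain ⟨r, hrmem, hfr⟩ :=
    intermediate_value_Icc hR1 hcont.continuousOn ⟨hf1', hfR⟩
  have hr1 : 1 ≤ r := hrmem.1
  obtain ⟨A, B, C', g1, g2, g3⟩ :=
    cubic_factor (-((r:ℂ)*v)) ((r:ℂ) * (starRingEnd ℂ) v) (-1)
  rw [neg_neg] at g1 g3
  set w : ℂ := (r:ℂ) * v with hw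
  have hcw : (starRingEnd ℂ) w = (r:ℂ) * (starRingEnd ℂ) v := by
    simp [hw, map_mul, Complex.conj_ofReal]
  have g2' : A*B + B*C' + A*C' = (starRingEnd ℂ) w := by rw [hcw]; exact g2
  have hdisc2 := disc_real w A B C' g1 g2' g3
  have hfr' : ((A-B)*(B-C')*(C'-A))^2 = 0 := by
    rw [hdisc2]
    have e1 : Complex.normSq w = n * r^2 := by
      simp [hw, Complex.normSq_mul, Complex.normSq_ofReal, hn]; ring
    have e2 : (w^3).re = r^3 * K := by
      rw [hw, mul_pow, ← Complex.ofReal_pow, Complex.re_ofReal_mul, hK]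
    rw [e1, e2]
    rw [show ((n*r^2)^2 - 8*(r^3*K) + 18*(n*r^2) - 27 : ℝ) = f r by
      simp only [hfdef]; ring]
    rw [hfr]
    simp
  have hP0 : (A-B)*(B-C')*(C'-A) = 0 := by
    exact pow_eq_zero_iff two_ne_zero |>.mp hfr'
  have hg1 : A + B + C' = (r:ℂ) * ((starRingEnd ℂ) u / 6) := by rw [← hv]; exact g1
  have hg2 : A*B + B*C' + A*C' = (r:ℂ) * (u / 6) := by rw [← hvc]; exact g2
  rcases mul_eq_zero.mp hP0 with h | h
  · rcases mul_eq_zero.mp h with h | h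
    · -- A = B
      exact doubleRoot u r hr1 A C'
        (by linear_combination hg1 + h)
        (by linear_combination hg2 + (A + C')*h)
        (by linear_combination g3 + (A*C')*h)
    · -- B = C'
      exact doubleRoot u r hr1 B A
        (by linear_combination hg1 + h)
        (by linear_combination hg2 + (A + B)*h)
        (by linear_combination g3 + (A*B)*h)
  · -- C' = A
    exact doubleRoot u r hr1 A B
      (by linear_combination hg1 - h)
      (by linear_combination hg2 - (A + B)*h)
      (by linear_combination g3 - (A*B)*h)

lemma Rcubic_eq_Qfun (u : ℂ) : Rcubic u = Qfun ((starRingEnd ℂ u) / 6) := by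
  funext ζ
  simp [Rcubic, Qfun, map_div₀, Complex.conj_conj, map_ofNat]

lemma offCircle (u a b c : ℂ)
    (hfac : ∀ ζ : ℂ, Rcubic u ζ = (ζ - a) * (ζ - b) * (ζ - c))
    (ha : 1 < ‖a‖) :
    ∃ (φ : ℝ) (ρ : ℝ), 1 < ρ ∧
      ∀ ζ : ℂ, Rcubic u ζ
        = (ζ - (ρ : ℂ) * Complex.exp (Complex.I * (φ : ℂ)))
          * (ζ - Complex.exp (-(2 * Complex.I * (φ : ℂ))))
          * (ζ - (ρ : ℂ)⁻¹ * Complex.exp (Complex.I * (φ : ℂ))) := by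
  have h0 := hfac 0
  simp only [Rcubic] at h0
  have habc : a * b * c = 1 := by linear_combination h0
  have ha0 : a ≠ 0 := by
    intro h; rw [h] at ha; simp at ha; linarith
  set a' : ℂ := ((starRingEnd ℂ) a)⁻¹ with ha'def
  have hroota : Rcubic u a = 0 := by rw [hfac a]; ring
  have hroota' : Rcubic u a' = 0 := by
    rw [Rcubic_eq_Qfun] at hroota ⊢
    exact Qfun_root_inv _ a ha0 hroota
  have habs' : ‖a'‖ = (‖a‖)⁻¹ := by
    rw [ha'def, norm_inv, Complex.norm_conj]
  have ha'ne : a' ≠ a := by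
    intro h
    rw [h] at habs'
    have h1 : (0:ℝ) < ‖a‖ := by linarith
    have h2 : (‖a‖)⁻¹ < 1 := inv_lt_one_of_one_lt₀ ha
    linarith
  have hmem : a' = b ∨ a' = c := by
    have := hroota'
    rw [hfac a'] at this
    rcases mul_eq_zero.mp this with h | h
    · rcases mul_eq_zero.mp h with h | h
      · exact absurd (sub_eq_zero.mp h) ha'ne
      · exact Or.inl (sub_eq_zero.mp h)
    · exact Or.inr (sub_eq_zero.mp h)
  set ρ : ℝ := ‖a‖ with hρ
  set φ : ℝ := Complex.arg a with hφ
  have E1 : (ρ : ℂ) * Complex.exp (Complex.I * (φ : ℂ)) = a := by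
    rw [mul_comm Complex.I]
    exact Complex.norm_mul_exp_arg_mul_I a
  have E3 : (ρ : ℂ)⁻¹ * Complex.exp (Complex.I * (φ : ℂ)) = a' := by
    rw [ha'def, ← E1]
    rw [map_mul, ← Complex.exp_conj]
    simp only [Complex.conj_ofReal, map_mul, Complex.conj_I]
    rw [mul_inv, ← Complex.exp_neg]
    ring_nf
  have hρ0 : (ρ : ℂ) ≠ 0 := by
    simp only [ne_eq, Complex.ofReal_eq_zero]
    positivity
  have hee : Complex.exp (Complex.I * (φ:ℂ)) * Complex.exp (Complex.I * (φ:ℂ))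
      = Complex.exp (2 * Complex.I * (φ:ℂ)) := by
    rw [← Complex.exp_add]; ring_nf
  have haa' : a * a' = Complex.exp (2 * Complex.I * (φ : ℂ)) := by
    rw [← E1, ← E3, ← hee]
    field_simp
  have E2 : Complex.exp (-(2 * Complex.I * (φ : ℂ))) = (a * a')⁻¹ := by
    rw [haa', Complex.exp_neg]
  have ha'0 : a' ≠ 0 := by
    rw [ha'def]
    simp [ha0]
  refine ⟨φ, ρ, ha, ?_⟩
  intro ζ
  rw [hfac ζ, E1, E2, E3]
  rcases hmem with h | h
  · subst h
    have hc : c = (a * a')⁻¹ := eq_inv_of_mul_eq_one_left (by linear_combination habc)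
    rw [hc]; ring
  · subst h
    have hb : b = (a * a')⁻¹ := eq_inv_of_mul_eq_one_left (by linear_combination habc)
    rw [hb]


lemma rootBig (u a b c x : ℂ)
    (hfac : ∀ ζ : ℂ, Rcubic u ζ = (ζ - a) * (ζ - b) * (ζ - c))
    (hx : x = a ∨ x = b ∨ x = c) (h1 : 1 < ‖x‖) :
    ∃ (φ : ℝ) (ρ : ℝ), 1 < ρ ∧
      ∀ ζ : ℂ, Rcubic u ζ
        = (ζ - (ρ : ℂ) * Complex.exp (Complex.I * (φ : ℂ)))
          * (ζ - Complex.exp (-(2 * Complex.I * (φ : ℂ))))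
          * (ζ - (ρ : ℂ)⁻¹ * Complex.exp (Complex.I * (φ : ℂ))) := by
  rcases hx with rfl | rfl | rfl
  · exact offCircle u x b c hfac h1
  · exact offCircle u x a c (fun ζ => by rw [hfac]; ring) h1
  · exact offCircle u x a b (fun ζ => by rw [hfac]; ring) h1

theorem stmt6 (u : ℂ) (hu : u ∉ regionU) :
    ∃ (φ : ℝ) (ρ : ℝ), 1 < ρ ∧
      ∀ ζ : ℂ, Rcubic u ζ
        = (ζ - (ρ : ℂ) * Complex.exp (Complex.I * (φ : ℂ)))
          * (ζ - Complex.exp (-(2 * Complex.I * (φ : ℂ))))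
          * (ζ - (ρ : ℂ)⁻¹ * Complex.exp (Complex.I * (φ : ℂ))) := by
  by_cases hu0 : u = 0
  · exact absurd ⟨0, ⟨le_refl 0, zero_le_one⟩, 0, by simp [hu0]⟩ hu
  obtain ⟨a, b, c, g1, g2, g3⟩ :=
    cubic_factor (-((starRingEnd ℂ) u / 6)) (u/6) (-1)
  rw [neg_neg] at g1 g3
  have hfac : ∀ ζ : ℂ, Rcubic u ζ = (ζ - a) * (ζ - b) * (ζ - c) := by
    intro ζ
    simp only [Rcubic]
    linear_combination ζ^2 * g1 - ζ * g2 + g3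
  have hna : a ≠ 0 := by rintro rfl; simp at g3
  have hnb : b ≠ 0 := by rintro rfl; simp at g3
  have hnc : c ≠ 0 := by rintro rfl; simp at g3
  by_cases hall : ‖a‖ = 1 ∧ ‖b‖ = 1 ∧ ‖c‖ = 1
  · exact absurd (allOnCircle u a b c hu0 g1 g2 g3 hall.1 hall.2.1 hall.2.2) hu
  · have hex : ∃ x : ℂ, (x = a ∨ x = b ∨ x = c) ∧ ‖x‖ ≠ 1 := by
      by_contra hcon
      push_neg at hcon
      exact hall ⟨hcon a (Or.inl rfl), hcon b (Or.inr (Or.inl rfl)),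
        hcon c (Or.inr (Or.inr rfl))⟩
    obtain ⟨x, hxmem, hxne⟩ := hex
    have hx0 : x ≠ 0 := by rcases hxmem with rfl | rfl | rfl <;> assumption
    rcases lt_or_gt_of_ne hxne with hlt | hgt
    · have hrx : Rcubic u x = 0 := by
        rw [hfac]
        rcases hxmem with rfl | rfl | rfl <;> ring
      have hrx' : Rcubic u ((starRingEnd ℂ x)⁻¹) = 0 := by
        rw [Rcubic_eq_Qfun] at hrx ⊢
        exact Qfun_root_inv _ x hx0 hrx
      have hxmem' : (starRingEnd ℂ x)⁻¹ = a ∨ (starRingEnd ℂ x)⁻¹ = b ∨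
          (starRingEnd ℂ x)⁻¹ = c := by
        rw [hfac] at hrx'
        rcases mul_eq_zero.mp hrx' with h | h
        · rcases mul_eq_zero.mp h with h | h
          · exact Or.inl (sub_eq_zero.mp h)
          · exact Or.inr (Or.inl (sub_eq_zero.mp h))
        · exact Or.inr (Or.inr (sub_eq_zero.mp h))
      have habs' : 1 < ‖((starRingEnd ℂ x)⁻¹)‖ := by
        rw [norm_inv, Complex.norm_conj]
        exact (one_lt_inv₀ (norm_pos_iff.mpr hx0)).mpr hlt
      exact rootBig u a b c _ hfac hxmem' habs'
    · exact rootBig u a b c x hfac hxmem hgt
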